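/- Let Σ₁, Σ₂ be d×d symmetric positive definite matrices and G a graph on {1,…,d}. For symmetric matrices Λ₁, Λ₂ supported on the sparsity pattern of G (i.e., (Λ_l)_{ij} = 0 for i ≠ j, {i,j} ∉ E(G)) with [[Λ₁, −I],[−I, Λ₂]] ⪰ 0, and for any Z₁, Z₂ ∈ 𝕊^d, Y ∈ ℝ^{d×d} with [[Z₁, Y],[Yᵀ, Z₂]] ⪰ 0 and [Z₁]_{G,0} = [Σ₁]_{G,0}, [Z₂]_{G,0} = [Σ₂]_{G,0}, one has Tr(Z₁) + Tr(Z₂) − 2Tr(Y) ≥ Tr(Σ₁) + Tr(Σ₂) − Tr(Σ₁Λ₁) − Tr(Σ₂Λ₂). -/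

import Mathlib

open Matrix BigOperators

open Classical in
noncomputable def sqrtm {d : ℕ} (A : Matrix (Fin d) (Fin d) ℝ) : Matrix (Fin d) (Fin d) ℝ :=
  if h : A.PosSemidef then
    h.1.eigenvectorUnitary.1 * diagonal ((RCLike.ofReal : ℝ → ℝ) ∘ Real.sqrt ∘ h.1.eigenvalues) *
      (star h.1.eigenvectorUnitary : Matrix (Fin d) (Fin d) ℝ)
  else 0

/-- The spectral norm (ℓ²-operator norm) of a real matrix. -/
noncomputable def specNorm {d : ℕ} (M : Matrix (Fin d) (Fin d) ℝ) : ℝ :=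
  ‖LinearMap.toContinuousLinearMap (Matrix.toEuclideanLin M)‖

open scoped MatrixOrder in
private lemma trace_mul_nonneg' {n : Type*} [Fintype n] [DecidableEq n] {A B : Matrix n n ℝ}
    (hA : A.PosSemidef) (hB : B.PosSemidef) : 0 ≤ (A * B).trace := by
  have hS : (CFC.sqrt A)ᴴ = CFC.sqrt A :=
    (Matrix.nonneg_iff_posSemidef.mp (CFC.sqrt_nonneg A)).1.eq
  have h : A * B = CFC.sqrt A * (CFC.sqrt A * B) := by
    rw [← mul_assoc, CFC.sqrt_mul_sqrt_self A (Matrix.nonneg_iff_posSemidef.mpr hA)]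
  have h2 : (A * B).trace = ((CFC.sqrt A)ᴴ * B * CFC.sqrt A).trace := by
    rw [h, trace_mul_comm, hS, mul_assoc]
  rw [h2]
  exact Finset.sum_nonneg fun i _ => by
    exact (hB.conjTranspose_mul_mul_same (CFC.sqrt A)).diag_nonneg

private lemma trace_fromBlocks' {n : Type*} [Fintype n] (A B C D : Matrix n n ℝ) :
    (Matrix.fromBlocks A B C D).trace = A.trace + D.trace := by
  simp [Matrix.trace, Matrix.diag, Fintype.sum_sum_type]

private lemma trace_mul_congr {n : Type*} [Fintype n] {Λ Z V : Matrix n n ℝ}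
    (h : ∀ i j, Λ i j ≠ 0 → Z j i = V j i) : (Λ * Z).trace = (Λ * V).trace := by
  simp only [Matrix.trace, Matrix.diag, Matrix.mul_apply]
  refine Finset.sum_congr rfl fun i _ => Finset.sum_congr rfl fun j _ => ?_
  by_cases hΛ : Λ i j = 0
  · simp [hΛ]
  · rw [h i j hΛ]

theorem stmt14 {d : ℕ} (G : SimpleGraph (Fin d))
    (V₁ V₂ Λ₁ Λ₂ Z₁ Z₂ Y : Matrix (Fin d) (Fin d) ℝ)
    (h1 : V₁.PosDef) (h2 : V₂.PosDef)
    (hΛ₁s : Λ₁.IsSymm) (hΛ₂s : Λ₂.IsSymm) (hZ₁s : Z₁.IsSymm) (hZ₂s : Z₂.IsSymm)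
    (hΛ₁p : ∀ i j, i ≠ j → ¬ G.Adj i j → Λ₁ i j = 0)
    (hΛ₂p : ∀ i j, i ≠ j → ¬ G.Adj i j → Λ₂ i j = 0)
    (hdual : (Matrix.fromBlocks Λ₁ (-1) (-1) Λ₂).PosSemidef)
    (hprimal : (Matrix.fromBlocks Z₁ Y Yᵀ Z₂).PosSemidef)
    (hZ₁ : ∀ i j, (i = j ∨ G.Adj i j) → Z₁ i j = V₁ i j)
    (hZ₂ : ∀ i j, (i = j ∨ G.Adj i j) → Z₂ i j = V₂ i j) :
    Z₁.trace + Z₂.trace - 2 * Y.trace ≥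
      V₁.trace + V₂.trace - (V₁ * Λ₁).trace - (V₂ * Λ₂).trace := by
  -- weak duality
  have key : 0 ≤ (Λ₁ * Z₁).trace + (Λ₂ * Z₂).trace - 2 * Y.trace := by
    have h0 := trace_mul_nonneg' hdual hprimal
    rw [Matrix.fromBlocks_multiply, trace_fromBlocks'] at h0
    simp only [neg_one_mul, Matrix.trace_add, Matrix.trace_neg, Matrix.trace_transpose] at h0
    linarith
  -- pattern helpers
  have pat₁ : ∀ i j, Λ₁ i j ≠ 0 → Z₁ j i = V₁ j i := by
    intro i j h
    by_cases hij : i = j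
    · exact hZ₁ j i (Or.inl hij.symm)
    · exact hZ₁ j i (Or.inr (G.adj_symm (by_contra fun hadj => h (hΛ₁p i j hij hadj))))
  have pat₂ : ∀ i j, Λ₂ i j ≠ 0 → Z₂ j i = V₂ j i := by
    intro i j h
    by_cases hij : i = j
    · exact hZ₂ j i (Or.inl hij.symm)
    · exact hZ₂ j i (Or.inr (G.adj_symm (by_contra fun hadj => h (hΛ₂p i j hij hadj))))
  have e₁ : (Λ₁ * Z₁).trace = (V₁ * Λ₁).trace := by
    rw [trace_mul_congr pat₁, Matrix.trace_mul_comm]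
  have e₂ : (Λ₂ * Z₂).trace = (V₂ * Λ₂).trace := by
    rw [trace_mul_congr pat₂, Matrix.trace_mul_comm]
  have t₁ : Z₁.trace = V₁.trace :=
    Finset.sum_congr rfl fun i _ => hZ₁ i i (Or.inl rfl)
  have t₂ : Z₂.trace = V₂.trace :=
    Finset.sum_congr rfl fun i _ => hZ₂ i i (Or.inl rfl)
  linarith [key, e₁, e₂, t₁, t₂]
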